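/- Let A ∈ ℝ^{m×m} be positive definite, meaning xᵀAx > 0 for every nonzero x ∈ ℝ^m (A need not be symmetric), let B ∈ ℝ^{m×n} be rank deficient (rank B < n), and let α ≥ 0, β > 0. Then the pseudo-spectral radius of the MGSSP iteration matrix is less than one: if λ ∈ ℂ with λ ≠ 1 and there exists a nonzero w ∈ ℂ^{m+n} with Q(α,β)w = λ P(α,β)w, then |λ| < 1. Hence the MGSSP iteration method is semi-convergent for the singular saddle point problem for all α ≥ 0 and β > 0. -/

import Mathlib

open Matrix

/-- The MGSSP splitting matrix `P(α,β) = [[αI+2A, 2B], [−2Bᵀ, βI]]`. -/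
noncomputable def Pmat {m n : ℕ} (A : Matrix (Fin m) (Fin m) ℝ) (B : Matrix (Fin m) (Fin n) ℝ)
    (α β : ℝ) : Matrix (Fin m ⊕ Fin n) (Fin m ⊕ Fin n) ℝ :=
  fromBlocks (α • 1 + (2 : ℝ) • A) ((2 : ℝ) • B) (-((2 : ℝ) • Bᵀ)) (β • 1)

/-- The MGSSP splitting matrix `Q(α,β) = [[αI+A, B], [−Bᵀ, βI]]`. -/
noncomputable def Qmat {m n : ℕ} (A : Matrix (Fin m) (Fin m) ℝ) (B : Matrix (Fin m) (Fin n) ℝ)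
    (α β : ℝ) : Matrix (Fin m ⊕ Fin n) (Fin m ⊕ Fin n) ℝ :=
  fromBlocks (α • 1 + A) B (-Bᵀ) (β • 1)


lemma key_re (a μ : ℂ) (b c : ℝ) (hb : 0 ≤ b) (hc : 0 ≤ c) (ha : 0 < a.re)
    (h : (b:ℂ) * μ^2 + a * μ + (c:ℂ) = 0) : μ.re ≤ 0 := by
  by_contra hr
  push_neg at hr
  rw [Complex.ext_iff] at h
  obtain ⟨h1, h2⟩ := h
  simp [Complex.add_re, Complex.add_im, Complex.mul_re, Complex.mul_im, pow_two] at h1 h2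
  set r := μ.re
  set i := μ.im
  have hns : 0 < r^2 + i^2 := by positivity
  have key : b*r*(r^2+i^2) + a.re*(r^2+i^2) + c*r = 0 := by linear_combination r * h1 + i * h2
  nlinarith [mul_pos ha hns, mul_nonneg (mul_nonneg hb hr.le) hns.le, mul_nonneg hc hr.le]

lemma dot_star_self (k : ℕ) (v : Fin k → ℂ) :
    star v ⬝ᵥ v = ((∑ i, Complex.normSq (v i) : ℝ) : ℂ) := by
  simp [dotProduct, Complex.normSq_eq_conj_mul_self]

lemma star_mulVec_real (k l : ℕ) (M : Matrix (Fin k) (Fin l) ℝ) (u : Fin l → ℂ) :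
    star (M.map Complex.ofReal *ᵥ u) = M.map Complex.ofReal *ᵥ star u := by
  funext i
  simp [mulVec, dotProduct, Complex.conj_ofReal, mul_comm]

lemma re_quad (k : ℕ) (A : Matrix (Fin k) (Fin k) ℝ) (u : Fin k → ℂ) :
    (star u ⬝ᵥ (A.map Complex.ofReal *ᵥ u)).re
      = (fun i => (u i).re) ⬝ᵥ (A *ᵥ fun i => (u i).re)
        + (fun i => (u i).im) ⬝ᵥ (A *ᵥ fun i => (u i).im) := by
  simp only [dotProduct, mulVec, Complex.re_sum, Matrix.map_apply, Complex.mul_re,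
    Complex.im_sum, Complex.re_sum]
  rw [← Finset.sum_add_distrib]
  refine Finset.sum_congr rfl fun i _ => ?_
  simp [Complex.re_sum, Complex.im_sum, Finset.mul_sum, Finset.sum_add_distrib]

set_option linter.unusedVariables false in
/-- Lemma 4.3 / Theorem 4.1: for the singular saddle point problem (rank-deficient
`B`), every eigenvalue of the MGSSP iteration matrix different from `1` has modulus
less than one, i.e. the pseudo-spectral radius of `T(α,β)` is less than `1`, so the
MGSSP iteration method is semi-convergent for all `α ≥ 0` and `β > 0`. -/
theorem mgssp_semiconvergence {m n : ℕ}
    (A : Matrix (Fin m) (Fin m) ℝ) (B : Matrix (Fin m) (Fin n) ℝ)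
    (hA : ∀ x : Fin m → ℝ, x ≠ 0 → 0 < x ⬝ᵥ (A *ᵥ x))
    (hB : B.rank < n)
    (α β : ℝ) (hα : 0 ≤ α) (hβ : 0 < β)
    (lam : ℂ) (hlam : lam ≠ 1)
    (w : Fin m ⊕ Fin n → ℂ) (hw : w ≠ 0)
    (heig : (Qmat A B α β).map Complex.ofReal *ᵥ w
        = lam • ((Pmat A B α β).map Complex.ofReal *ᵥ w)) :
    ‖lam‖ < 1 := by
  classical
  set AC := A.map Complex.ofReal with hACdef
  set BC := B.map Complex.ofReal with hBCdef
  have hQ : (Qmat A B α β).map Complex.ofReal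
      = fromBlocks ((α:ℂ) • 1 + AC) BC (-(BCᵀ)) ((β:ℂ) • 1) := by
    ext (i|i) (j|j) <;>
      simp [Qmat, Matrix.map_apply, Matrix.one_apply, apply_ite, Matrix.fromBlocks,
        AC, BC] <;> split <;> simp_all
  have hP : (Pmat A B α β).map Complex.ofReal
      = fromBlocks ((α:ℂ) • 1 + (2:ℂ) • AC) ((2:ℂ) • BC) (-((2:ℂ) • BCᵀ)) ((β:ℂ) • 1) := by
    ext (i|i) (j|j) <;>
      simp [Pmat, Matrix.map_apply, Matrix.one_apply, apply_ite, Matrix.fromBlocks,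
        AC, BC] <;> split <;> simp_all
  set u : Fin m → ℂ := w ∘ Sum.inl with hudef
  set v : Fin n → ℂ := w ∘ Sum.inr with hvdef
  rw [hQ, hP, fromBlocks_mulVec, fromBlocks_mulVec] at heig
  have h1 : (α:ℂ) • u + AC *ᵥ u + BC *ᵥ v
      = lam • ((α:ℂ) • u + (2:ℂ) • (AC *ᵥ u) + (2:ℂ) • (BC *ᵥ v)) := by
    funext i
    have := congrFun heig (Sum.inl i)
    simp [add_mulVec, smul_mulVec, one_mulVec] at this; exact this
  have h2 : -(BCᵀ *ᵥ u) + (β:ℂ) • v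
      = lam • (-((2:ℂ) • (BCᵀ *ᵥ u)) + (β:ℂ) • v) := by
    funext i
    have := congrFun heig (Sum.inr i)
    simp [neg_mulVec, smul_mulVec, one_mulVec] at this; exact this
  -- u ≠ 0
  have hwelim : w = Sum.elim u v := by funext x; cases x <;> rfl
  have h1l : (1:ℂ) - lam ≠ 0 := sub_ne_zero.mpr fun h => hlam h.symm
  have hune : u ≠ 0 := by
    intro hu0
    apply hw
    rw [hwelim, hu0]
    have hv0 : v = 0 := by
      funext j
      have := congrFun h2 j
      simp [hu0, mulVec_zero] at this
      have : ((1:ℂ) - lam) * ((β:ℂ) * v j) = 0 := by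
        simp [sub_mul]; linear_combination this
      rcases mul_eq_zero.mp this with h | h
      · exact absurd h h1l
      · rcases mul_eq_zero.mp h with h' | h'
        · exact absurd (Complex.ofReal_eq_zero.mp h') (ne_of_gt hβ)
        · exact h'
    rw [hv0]
    funext x; cases x <;> simp
  -- scalar quantities
  set g : Fin n → ℂ := BCᵀ *ᵥ u with hgdef
  set pC : ℂ := star u ⬝ᵥ u with hpCdef
  set aC : ℂ := star u ⬝ᵥ (AC *ᵥ u) with haCdef
  set tC : ℂ := star u ⬝ᵥ (BC *ᵥ v) with htCdef
  set bC : ℂ := star g ⬝ᵥ g with hbCdef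
  set sC : ℂ := star g ⬝ᵥ v with hsCdef
  have e1 : (α:ℂ) * pC + aC + tC = lam * ((α:ℂ) * pC + 2 * aC + 2 * tC) := by
    have h := congrArg (fun z => star u ⬝ᵥ z) h1
    simp only [dotProduct_add, dotProduct_smul, smul_eq_mul] at h
    linear_combination h
  have e2 : -bC + (β:ℂ) * sC = lam * (-(2 * bC) + (β:ℂ) * sC) := by
    have h := congrArg (fun z => star g ⬝ᵥ z) h2
    simp only [dotProduct_add, dotProduct_smul, dotProduct_neg, smul_eq_mul] at h
    linear_combination h
  have hts : tC = sC := by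
    rw [htCdef, hsCdef, dotProduct_mulVec]
    have hsg : star g = BCᵀ *ᵥ star u := by
      rw [hgdef, hBCdef, ← Matrix.transpose_map, star_mulVec_real]
    rw [hsg, Matrix.mulVec_transpose]
  have master : (α:ℂ)*(β:ℂ)*(1-lam)^2*pC + (β:ℂ)*(1-lam)*(1-2*lam)*aC
      + (1-2*lam)^2*bC = 0 := by
    linear_combination ((β:ℂ)*(1-lam)) * e1 - (1-2*lam) * e2
      - ((β:ℂ)*(1-lam)*(1-2*lam)) * hts
  -- realness
  set preal : ℝ := ∑ i, Complex.normSq (u i) with hprealdef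
  set breal : ℝ := ∑ i, Complex.normSq (g i) with hbrealdef
  have hpC : pC = (preal : ℂ) := dot_star_self m u
  have hbC : bC = (breal : ℂ) := dot_star_self n g
  have hppos : 0 < preal := by
    rcases Function.ne_iff.mp hune with ⟨i, hi⟩
    exact Finset.sum_pos' (fun j _ => Complex.normSq_nonneg _)
      ⟨i, Finset.mem_univ i, Complex.normSq_pos.mpr hi⟩
  have hbnn : 0 ≤ breal := Finset.sum_nonneg fun j _ => Complex.normSq_nonneg _
  have haRe : 0 < aC.re := by
    rw [haCdef, hACdef, re_quad]
    set x : Fin m → ℝ := fun i => (u i).re with hx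
    set y : Fin m → ℝ := fun i => (u i).im with hy
    by_cases hx0 : x = 0
    · have hy0 : y ≠ 0 := by
        intro hy0
        apply hune
        funext i
        have hxi := congrFun hx0 i
        have hyi := congrFun hy0 i
        simp [hx, hy] at hxi hyi
        exact Complex.ext hxi hyi
      have : x ⬝ᵥ A *ᵥ x = 0 := by simp [hx0]
      rw [this, zero_add]
      exact hA y hy0
    · have h1 := hA x hx0
      by_cases hy0 : y = 0
      · have : y ⬝ᵥ A *ᵥ y = 0 := by simp [hy0]
        rw [this, add_zero]; exact h1
      · exact add_pos h1 (hA y hy0)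
  -- the quadratic in μ
  set μ : ℂ := (1 - 2*lam) / (1 - lam) with hμdef
  have hμeq : μ * (1 - lam) = 1 - 2*lam := div_mul_cancel₀ _ h1l
  have master' : (α:ℂ)*(β:ℂ)*(1-lam)^2*(preal:ℂ) + (β:ℂ)*(1-lam)*(1-2*lam)*aC
      + (1-2*lam)^2*(breal:ℂ) = 0 := by rw [← hpC, ← hbC]; exact master
  have quad : ((breal:ℝ):ℂ) * μ^2 + ((β:ℂ) * aC) * μ + ((α*β*preal : ℝ):ℂ) = 0 := by
    have h2l : ((1:ℂ) - lam)^2 ≠ 0 := pow_ne_zero _ h1l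
    apply mul_left_cancel₀ h2l
    rw [mul_zero]
    push_cast
    linear_combination master' + ((breal:ℂ)*(μ*(1-lam)+(1-2*lam))) * hμeq
      + ((β:ℂ)*aC*(1-lam)) * hμeq
  have hβa : 0 < ((β:ℂ) * aC).re := by
    have : ((β:ℂ) * aC).re = β * aC.re := by
      simp [Complex.mul_re, Complex.ofReal_re, Complex.ofReal_im]
    rw [this]
    exact mul_pos hβ haRe
  have hcnn : (0:ℝ) ≤ α*β*preal := by positivity
  have hμre : μ.re ≤ 0 := key_re _ μ breal (α*β*preal) hbnn hcnn hβa quad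
  -- conclude
  have hlameq : lam * (2 - μ) = 1 - μ := by linear_combination hμeq
  have h2μ : (2 - μ).re > 0 := by
    simp [Complex.sub_re]
    linarith
  have h2μne : (2:ℂ) - μ ≠ 0 := fun h => by simp [h] at h2μ
  have habs : ‖1 - μ‖ < ‖2 - μ‖ := by
    rw [Complex.norm_def, Complex.norm_def]
    apply Real.sqrt_lt_sqrt (Complex.normSq_nonneg _)
    simp [Complex.normSq_apply, Complex.sub_re, Complex.sub_im]
    nlinarith [hμre]
  have hpos : 0 < ‖2 - μ‖ := norm_pos_iff.mpr h2μne
  have hmain : ‖lam‖ * ‖2 - μ‖ < ‖2 - μ‖ := by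
    calc ‖lam‖ * ‖2 - μ‖
        = ‖lam * (2 - μ)‖ := (norm_mul _ _).symm
      _ = ‖1 - μ‖ := by rw [hlameq]
      _ < ‖2 - μ‖ := habs
  exact (mul_lt_iff_lt_one_left hpos).mp hmain
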